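/- Let 𝕂 be a field equipped with a non-Archimedean absolute value, let G and Q be t.d.l.c. groups, let φ : G → Q be a continuous surjective group homomorphism, and let M ≥ 0. If G admits a left-invariant normed 𝕂-mean of operator norm ≤ M, then Q admits a left-invariant normed 𝕂-mean of operator norm ≤ M. In particular this applies to Q = G/H for a closed normal subgroup H of G, and ‖Q‖_𝕂 ≤ ‖G‖_𝕂. -/

import Mathlib

open BoundedContinuousFunction

/-- The left translate of a bounded continuous function: `(leftTranslate 𝕂 g f) x = f (g⁻¹ * x)`. -/
noncomputable def leftTranslate {G : Type*} [Group G] [TopologicalSpace G] [IsTopologicalGroup G]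
    (𝕂 : Type*) [NormedField 𝕂] (g : G) (f : G →ᵇ 𝕂) : G →ᵇ 𝕂 :=
  f.compContinuous ⟨fun x => g⁻¹ * x, continuous_mul_left g⁻¹⟩

/-- `m` is a left-invariant normed `𝕂`-mean on `G`: a bounded (equivalently, continuous)
linear functional on the space of bounded continuous `𝕂`-valued functions on `G`, sending the
constant function `𝟙_G` to `1`, and invariant under left translation. -/
def IsInvariantMean (𝕂 : Type*) [NormedField 𝕂] (G : Type*) [Group G] [TopologicalSpace G]
    [IsTopologicalGroup G] (m : (G →ᵇ 𝕂) →ₗ[𝕂] 𝕂) : Prop :=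
  (∃ C : ℝ, ∀ f : G →ᵇ 𝕂, ‖m f‖ ≤ C * ‖f‖) ∧
    m (BoundedContinuousFunction.const G (1 : 𝕂)) = 1 ∧
    ∀ (g : G) (f : G →ᵇ 𝕂), m (leftTranslate 𝕂 g f) = m f

/-- The operator norm of the linear functional `m` is at most `C`. -/
def MeanNormLE (𝕂 : Type*) [NormedField 𝕂] (G : Type*) [Group G] [TopologicalSpace G]
    [IsTopologicalGroup G] (m : (G →ᵇ 𝕂) →ₗ[𝕂] 𝕂) (C : ℝ) : Prop :=
  ∀ f : G →ᵇ 𝕂, ‖m f‖ ≤ C * ‖f‖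

/-- If `φ : G → Q` is a continuous surjective homomorphism of t.d.l.c. groups
and `G` admits a left-invariant normed `𝕂`-mean of operator norm `≤ M`, then so does `Q`. -/
theorem invariantMean_of_surjective (𝕂 : Type*) [NormedField 𝕂] [IsUltrametricDist 𝕂]
    (G : Type*) [Group G] [TopologicalSpace G] [IsTopologicalGroup G]
    [LocallyCompactSpace G] [TotallyDisconnectedSpace G] [T2Space G]
    (Q : Type*) [Group Q] [TopologicalSpace Q] [IsTopologicalGroup Q]
    [LocallyCompactSpace Q] [TotallyDisconnectedSpace Q] [T2Space Q]
    (φ : G →* Q) (hφc : Continuous φ) (hφs : Function.Surjective φ)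
    (M : ℝ) (hM : 0 ≤ M)
    (h : ∃ m : (G →ᵇ 𝕂) →ₗ[𝕂] 𝕂, IsInvariantMean 𝕂 G m ∧ MeanNormLE 𝕂 G m M) :
    ∃ m' : (Q →ᵇ 𝕂) →ₗ[𝕂] 𝕂, IsInvariantMean 𝕂 Q m' ∧ MeanNormLE 𝕂 Q m' M := by
  obtain ⟨m, ⟨_, hone, hinv⟩, hnorm⟩ := h
  let P : (Q →ᵇ 𝕂) →ₗ[𝕂] (G →ᵇ 𝕂) :=
    { toFun := fun f => f.compContinuous ⟨φ, hφc⟩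
      map_add' := fun f g => by ext x; simp
      map_smul' := fun c f => by ext x; simp }
  refine ⟨m.comp P, ⟨⟨M, ?_⟩, ?_, ?_⟩, ?_⟩
  · intro f
    exact (hnorm _).trans (mul_le_mul_of_nonneg_left (norm_compContinuous_le f _) hM)
  · have : P (BoundedContinuousFunction.const Q (1 : 𝕂)) =
        BoundedContinuousFunction.const G (1 : 𝕂) := by ext x; simp [P]
    simp [this, hone]
  · intro q f
    obtain ⟨g, rfl⟩ := hφs q
    have : P (leftTranslate 𝕂 (φ g) f) = leftTranslate 𝕂 g (P f) := by
      ext x; simp [P, leftTranslate]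
    simp only [LinearMap.comp_apply, this, hinv]
  · intro f
    exact (hnorm _).trans (mul_le_mul_of_nonneg_left (norm_compContinuous_le f _) hM)
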